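/- Let G be a K_{3,3}-saturated graph with minimum degree 2, and let a be a vertex of degree 2 with neighbors a1, a2. If a1 and a2 are non-adjacent, then the number of vertices outside N[a] having at least one neighbor in {a1, a2} is at least 4. -/

import Mathlib

open SimpleGraph

/-- `G` contains a subgraph isomorphic to `K_{3,3}`. -/
def ContainsK33 {V : Type*} (G : SimpleGraph V) : Prop :=
  ∃ f : Fin 3 ⊕ Fin 3 → V, Function.Injective f ∧
    ∀ a b, (completeBipartiteGraph (Fin 3) (Fin 3)).Adj a b → G.Adj (f a) (f b)

/-- `G` is `K_{3,3}`-saturated. -/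
def K33Saturated {V : Type*} (G : SimpleGraph V) : Prop :=
  ¬ ContainsK33 G ∧
    ∀ x y : V, x ≠ y → ¬ G.Adj x y → ContainsK33 (G ⊔ SimpleGraph.edge x y)

lemma aux12 {V : Type*} [Finite V] (G : SimpleGraph V)
    (a a1 a2 : V) (hN : G.neighborSet a = {a1, a2}) (h12 : a1 ≠ a2)
    (f : Fin 3 ⊕ Fin 3 → V) (hf : Function.Injective f)
    (hadj : ∀ p q, (completeBipartiteGraph (Fin 3) (Fin 3)).Adj p q →
      (G ⊔ SimpleGraph.edge a1 a2).Adj (f p) (f q))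
    (i j : Fin 3) (h1 : f (Sum.inl i) = a1) (h2 : f (Sum.inr j) = a2) :
    4 ≤ {v : V | v ∉ insert a ({a1, a2} : Set V) ∧
          (G.Adj v a1 ∨ G.Adj v a2)}.ncard := by
  have exo : ∀ k : Fin 3, ∃ k1 k2 : Fin 3, k1 ≠ k2 ∧ k1 ≠ k ∧ k2 ≠ k := by decide
  obtain ⟨i1, i2, hi12, hi1, hi2⟩ := exo i
  obtain ⟨j1, j2, hj12, hj1, hj2⟩ := exo j
  set b1 := f (Sum.inl i1) with hb1
  set b2 := f (Sum.inl i2) with hb2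
  set c1 := f (Sum.inr j1) with hc1
  set c2 := f (Sum.inr j2) with hc2
  -- generic edge extraction
  have key : ∀ (p q : Fin 3 ⊕ Fin 3), (completeBipartiteGraph (Fin 3) (Fin 3)).Adj p q →
      f p ≠ a1 → f q ≠ a1 → G.Adj (f p) (f q) := by
    intro p q hpq hp hq
    rcases hadj p q hpq with h | h
    · exact h
    · rw [edge_adj] at h
      rcases h.1 with ⟨h', _⟩ | ⟨_, h'⟩ <;> [exact absurd h' hp; exact absurd h' hq]
  have key2 : ∀ (p q : Fin 3 ⊕ Fin 3), (completeBipartiteGraph (Fin 3) (Fin 3)).Adj p q →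
      f p ≠ a2 → f q ≠ a2 → G.Adj (f p) (f q) := by
    intro p q hpq hp hq
    rcases hadj p q hpq with h | h
    · exact h
    · rw [edge_adj] at h
      rcases h.1 with ⟨_, h'⟩ | ⟨h', _⟩ <;> [exact absurd h' hq; exact absurd h' hp]
  have adjlr : ∀ (x y : Fin 3), (completeBipartiteGraph (Fin 3) (Fin 3)).Adj (Sum.inl x) (Sum.inr y) := by
    intro x y; simp
  have adjrl : ∀ (x y : Fin 3), (completeBipartiteGraph (Fin 3) (Fin 3)).Adj (Sum.inr x) (Sum.inl y) := by
    intro x y; simp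
  have hb1ne1 : b1 ≠ a1 := by rw [hb1, ← h1]; exact fun h => hi1 (Sum.inl_injective (hf h))
  have hb2ne1 : b2 ≠ a1 := by rw [hb2, ← h1]; exact fun h => hi2 (Sum.inl_injective (hf h))
  have hb1ne2 : b1 ≠ a2 := by rw [hb1, ← h2]; exact fun h => Sum.inl_ne_inr (hf h)
  have hb2ne2 : b2 ≠ a2 := by rw [hb2, ← h2]; exact fun h => Sum.inl_ne_inr (hf h)
  have hc1ne2 : c1 ≠ a2 := by rw [hc1, ← h2]; exact fun h => hj1 (Sum.inr_injective (hf h))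
  have hc2ne2 : c2 ≠ a2 := by rw [hc2, ← h2]; exact fun h => hj2 (Sum.inr_injective (hf h))
  have hc1ne1 : c1 ≠ a1 := by rw [hc1, ← h1]; exact fun h => Sum.inr_ne_inl (hf h)
  have hc2ne1 : c2 ≠ a1 := by rw [hc2, ← h1]; exact fun h => Sum.inr_ne_inl (hf h)
  -- edges in G
  have hb1a2 : G.Adj b1 a2 := h2 ▸ key _ _ (adjlr i1 j) hb1ne1 (h2 ▸ h12.symm)
  have hb2a2 : G.Adj b2 a2 := h2 ▸ key _ _ (adjlr i2 j) hb2ne1 (h2 ▸ h12.symm)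
  have hc1a1 : G.Adj c1 a1 := h1 ▸ key2 _ _ (adjrl j1 i) hc1ne2 (h1 ▸ h12)
  have hc2a1 : G.Adj c2 a1 := h1 ▸ key2 _ _ (adjrl j2 i) hc2ne2 (h1 ▸ h12)
  have hb1c1 : G.Adj b1 c1 := key _ _ (adjlr i1 j1) hb1ne1 hc1ne1
  have hb2c1 : G.Adj b2 c1 := key _ _ (adjlr i2 j1) hb2ne1 hc1ne1
  have hb1c2 : G.Adj b1 c2 := key _ _ (adjlr i1 j2) hb1ne1 hc2ne1
  -- none equal to a
  have memN : ∀ v : V, G.Adj a v → v = a1 ∨ v = a2 := by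
    intro v hv
    have : v ∈ G.neighborSet a := hv
    rw [hN] at this; exact this
  have hb1na : b1 ≠ a := by
    intro h; rcases memN c1 (h ▸ hb1c1) with h' | h'
    exacts [hc1ne1 h', hc1ne2 h']
  have hb2na : b2 ≠ a := by
    intro h; rcases memN c1 (h ▸ hb2c1) with h' | h'
    exacts [hc1ne1 h', hc1ne2 h']
  have hc1na : c1 ≠ a := by
    intro h; rcases memN b1 (h ▸ hb1c1.symm) with h' | h'
    exacts [hb1ne1 h', hb1ne2 h']
  have hc2na : c2 ≠ a := by
    intro h; rcases memN b1 (h ▸ hb1c2.symm) with h' | h'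
    exacts [hb1ne1 h', hb1ne2 h']
  -- distinctness
  have hb12 : b1 ≠ b2 := fun h => hi12 (Sum.inl_injective (hf h))
  have hc12 : c1 ≠ c2 := fun h => hj12 (Sum.inr_injective (hf h))
  have hbc : ∀ (x y : Fin 3), f (Sum.inl x) ≠ f (Sum.inr y) :=
    fun x y h => Sum.inl_ne_inr (hf h)
  have hsub : ({b1, b2, c1, c2} : Set V) ⊆ {v : V | v ∉ insert a ({a1, a2} : Set V) ∧
      (G.Adj v a1 ∨ G.Adj v a2)} := by
    intro v hv
    rcases hv with rfl | rfl | rfl | rfl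
    · exact ⟨by simp [hb1na, hb1ne1, hb1ne2], Or.inr hb1a2⟩
    · exact ⟨by simp [hb2na, hb2ne1, hb2ne2], Or.inr hb2a2⟩
    · exact ⟨by simp [hc1na, hc1ne1, hc1ne2], Or.inl hc1a1⟩
    · exact ⟨by simp [hc2na, hc2ne1, hc2ne2], Or.inl hc2a1⟩
  have hcard : ({b1, b2, c1, c2} : Set V).ncard = 4 := by
    rw [Set.ncard_insert_of_notMem (by simp [hb12]; exact ⟨hbc i1 j1, hbc i1 j2⟩) (Set.toFinite _),
        Set.ncard_insert_of_notMem (by simp; exact ⟨hbc i2 j1, hbc i2 j2⟩) (Set.toFinite _),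
        Set.ncard_insert_of_notMem (by simp [hc12]) (Set.toFinite _),
        Set.ncard_singleton]
  calc 4 = ({b1, b2, c1, c2} : Set V).ncard := hcard.symm
    _ ≤ _ := Set.ncard_le_ncard hsub (Set.toFinite _)

theorem stmt_12 {V : Type*} [Fintype V] (G : SimpleGraph V) [DecidableRel G.Adj]
    (hG : K33Saturated G) (hmin : ∀ v : V, 2 ≤ G.degree v)
    (a a1 a2 : V) (hdeg : G.degree a = 2) (hN : G.neighborSet a = {a1, a2})
    (h12 : a1 ≠ a2) (hnadj : ¬ G.Adj a1 a2) :
    4 ≤ {v : V | v ∉ insert a (G.neighborSet a) ∧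
          (G.Adj v a1 ∨ G.Adj v a2)}.ncard := by
  obtain ⟨f, hf, hadj⟩ := hG.2 a1 a2 h12 hnadj
  rw [hN]
  -- the new edge must be used
  by_cases hcase : ∃ (i : Fin 3) (j : Fin 3),
      (f (Sum.inl i) = a1 ∧ f (Sum.inr j) = a2) ∨ (f (Sum.inl i) = a2 ∧ f (Sum.inr j) = a1)
  · obtain ⟨i, j, h | h⟩ := hcase
    · exact aux12 G a a1 a2 hN h12 f hf hadj i j h.1 h.2
    · have hN' : G.neighborSet a = {a2, a1} := by rw [hN]; exact Set.pair_comm a1 a2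
      have hadj' : ∀ p q, (completeBipartiteGraph (Fin 3) (Fin 3)).Adj p q →
          (G ⊔ SimpleGraph.edge a2 a1).Adj (f p) (f q) := by
        intro p q hpq
        have := hadj p q hpq
        have he : SimpleGraph.edge a1 a2 = SimpleGraph.edge a2 a1 := by
          ext u v; rw [edge_adj, edge_adj]; tauto
        rwa [he] at this
      have := aux12 G a a2 a1 hN' h12.symm f hf hadj' i j h.1 h.2
      convert this using 2
      ext v
      simp only [Set.mem_setOf_eq, Set.mem_insert_iff]
      constructor <;> rintro ⟨h1, h2⟩ <;> exact ⟨by tauto, by tauto⟩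
  · exfalso
    apply hG.1
    refine ⟨f, hf, fun p q hpq => ?_⟩
    have := hadj p q hpq
    rcases this with h | h
    · exact h
    · exfalso
      rw [edge_adj] at h
      push_neg at hcase
      rcases p with p | p <;> rcases q with q | q
      · simp [completeBipartiteGraph] at hpq
      · rcases h.1 with ⟨h1, h2⟩ | ⟨h1, h2⟩
        · exact (hcase p q).1 h1 h2
        · exact (hcase p q).2 h1 h2
      · rcases h.1 with ⟨h1, h2⟩ | ⟨h1, h2⟩
        · exact (hcase q p).2 h2 h1
        · exact (hcase q p).1 h2 h1
      · simp [completeBipartiteGraph] at hpq
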